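/- Let T be an open convex cone in a finite-dimensional vector space V, let p be in the Euclidean boundary of T with p ∉ [0]_T, let z ∈ T, and set y_λ := (1−λ)p + λz for λ ∈ (0,1). Then M_T(p / y_λ) tends to 1 as λ → 0, i.e. the reverse Funk distance r_T(y_λ, p) := log M_T(p / y_λ) tends to 0. -/

import Mathlib

open Set Filter Topology

variable {V : Type*} [NormedAddCommGroup V] [NormedSpace ℝ V] [FiniteDimensional ℝ V]

/-- An open cone: non-empty, open, convex, invariant under positive scaling, not containing 0. -/
def IsOpenCone (T : Set V) : Prop :=
  T.Nonempty ∧ IsOpen T ∧ Convex ℝ T ∧ (∀ c : ℝ, 0 < c → ∀ u ∈ T, c • u ∈ T) ∧ (0 : V) ∉ T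

/-- The gauge `M_T(y/x) = inf {λ > 0 : λ • x - y ∈ closure T}`. -/
noncomputable def funkM (T : Set V) (y x : V) : ℝ :=
  sInf {l : ℝ | 0 < l ∧ l • x - y ∈ closure T}

/-- The Funk metric `F_T(x,y) = log inf {λ > 0 : λ • y - x ∈ closure T}`. -/
noncomputable def funkF (T : Set V) (x y : V) : ℝ := Real.log (funkM T x y)

/-- The reverse Funk metric `r_T(x,y) = F_T(y,x)`. -/
noncomputable def revF (T : Set V) (x y : V) : ℝ := Real.log (funkM T y x)

/-- The Hilbert metric as the symmetrisation of the Funk metric. -/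
noncomputable def hilD (T : Set V) (x y : V) : ℝ := funkF T x y + revF T x y

/-- The dual cone, as a set of continuous linear functionals. -/
def dualCone (T : Set V) : Set (V →L[ℝ] ℝ) := {z | ∀ u ∈ T, 0 ≤ z u}

/-- The open tangent cone `τ(T,x) = {λ (w - x) : λ > 0, w ∈ T}`. -/
def openTangent (T : Set V) (x : V) : Set V :=
  {v | ∃ l : ℝ, 0 < l ∧ ∃ w ∈ T, v = l • (w - x)}

/-- along a segment from `p ∈ ∂T`, `p ∉ [0]_T`, to `z ∈ T`,
`M_T(p / y_λ) → 1`, i.e. the reverse Funk distance `r_T(y_λ, p) → 0` as `λ → 0`. -/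
theorem tendsto_funkM_segment (T : Set V) (hT : IsOpenCone T) (p : V) (hp : p ∈ frontier T)
    (hp0 : ¬ (-p ∈ closure T ∧ p ∈ closure T)) (z : V) (hz : z ∈ T) :
    Tendsto (fun l : ℝ => funkM T p ((1 - l) • p + l • z)) (𝓝[>] (0 : ℝ)) (𝓝 1) ∧
    Tendsto (fun l : ℝ => revF T ((1 - l) • p + l • z) p) (𝓝[>] (0 : ℝ)) (𝓝 0) := by
  obtain ⟨hne, hopen, hconv, hcone, h0T⟩ := hT
  have hpcl : p ∈ closure T := frontier_subset_closure hp
  have hnp : -p ∉ closure T := fun h => hp0 ⟨h, hpcl⟩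
  -- closure of T is a cone
  have hclsmul : ∀ c : ℝ, 0 < c → ∀ u ∈ closure T, c • u ∈ closure T := by
    intro c hc u hu
    have h1 : c • u ∈ closure ((fun v : V => c • v) '' T) :=
      image_closure_subset_closure_image (continuous_const_smul c) ⟨u, hu, rfl⟩
    refine closure_mono ?_ h1
    rintro _ ⟨w, hw, rfl⟩
    exact hcone c hc w hw
  -- closure of T is closed under addition
  have hcladd : ∀ u ∈ closure T, ∀ v ∈ closure T, u + v ∈ closure T := by
    intro u hu v hv
    have hmid : (1/2 : ℝ) • u + (1/2 : ℝ) • v ∈ closure T :=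
      hconv.closure hu hv (by norm_num) (by norm_num) (by norm_num)
    have := hclsmul 2 (by norm_num) _ hmid
    have he : (2:ℝ) • ((1/2 : ℝ) • u + (1/2 : ℝ) • v) = u + v := by
      rw [smul_add, smul_smul, smul_smul]; norm_num
    rwa [he] at this
  -- the set S
  set S : Set ℝ := {t : ℝ | t • z - p ∈ closure T} with hSdef
  have hSclosed : IsClosed S := by
    have : Continuous (fun t : ℝ => t • z - p) := by fun_prop
    exact isClosed_closure.preimage this
  have hSpos : ∀ t ∈ S, 0 < t := by
    intro t ht
    by_contra hle
    push_neg at hle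
    rcases eq_or_lt_of_le hle with heq | hlt
    · apply hnp
      have h' : t • z - p ∈ closure T := ht
      subst heq; simpa using h'
    · apply hnp
      have h1 : (-t) • z ∈ closure T := subset_closure (hcone (-t) (by linarith) z hz)
      have h2 := hcladd _ ht _ h1
      have : t • z - p + (-t) • z = -p := by
        rw [neg_smul]; abel
      rwa [this] at h2
  have hSne : S.Nonempty := by
    obtain ⟨r, hr, hball⟩ := Metric.isOpen_iff.mp hopen z hz
    set ε : ℝ := r / (2 * (‖p‖ + 1)) with hε
    have hεpos : 0 < ε := by
      apply div_pos hr; positivity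
    have hmem : z - ε • p ∈ T := by
      apply hball
      rw [Metric.mem_ball, dist_eq_norm]
      have : z - ε • p - z = -(ε • p) := by abel
      rw [this, norm_neg, norm_smul, Real.norm_eq_abs, abs_of_pos hεpos]
      have hp1 : ‖p‖ < ‖p‖ + 1 := by linarith
      calc ε * ‖p‖ ≤ ε * (‖p‖ + 1) := by nlinarith [norm_nonneg p]
        _ = r / 2 := by rw [hε]; field_simp
        _ < r := by linarith
    refine ⟨1/ε, ?_⟩
    have h1 : (1/ε) • (z - ε • p) ∈ T := hcone _ (by positivity) _ hmem
    have he : (1/ε) • (z - ε • p) = (1/ε) • z - p := by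
      rw [smul_sub, smul_smul]
      congr 1
      rw [one_div_mul_cancel (ne_of_gt hεpos), one_smul]
    rw [hSdef]; rw [he] at h1
    exact subset_closure h1
  have hSbdd : BddBelow S := ⟨0, fun t ht => (hSpos t ht).le⟩
  set t₀ : ℝ := sInf S with ht₀def
  have ht₀S : t₀ ∈ S := hSclosed.csInf_mem hSne hSbdd
  have ht₀pos : 0 < t₀ := hSpos t₀ ht₀S
  -- main bounds
  have key : ∀ a : ℝ, a ∈ Ioo (0:ℝ) 1 →
      t₀ / (a + t₀ * (1 - a)) ≤ funkM T p ((1 - a) • p + a • z) ∧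
      funkM T p ((1 - a) • p + a • z) ≤ 1 / (1 - a) := by
    intro a ⟨ha0, ha1⟩
    have h1a : 0 < 1 - a := by linarith
    set y : V := (1 - a) • p + a • z with hydef
    set A : Set ℝ := {l : ℝ | 0 < l ∧ l • y - p ∈ closure T} with hAdef
    have hmem1 : (1/(1-a)) ∈ A := by
      constructor
      · positivity
      · have he : (1/(1-a)) • y - p = (a/(1-a)) • z := by
          rw [hydef, smul_add, smul_smul, smul_smul, one_div_mul_cancel (ne_of_gt h1a), one_smul,
            add_sub_cancel_left]
          congr 1
          field_simp
        rw [he]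
        exact subset_closure (hcone _ (by positivity) _ hz)
    have hd : 0 < a + t₀ * (1 - a) := by positivity
    have hlow : ∀ l ∈ A, t₀ / (a + t₀ * (1 - a)) ≤ l := by
      rintro l ⟨hl, hlT⟩
      rcases le_or_gt (1 - l * (1 - a)) 0 with hc | hc
      · have hge : 1 / (1 - a) ≤ l := by
          rw [div_le_iff₀ h1a]; linarith
        refine le_trans ?_ hge
        rw [div_le_div_iff₀ hd h1a]
        nlinarith
      · set c : ℝ := 1 - l * (1 - a) with hcdef
        have hcne : c ≠ 0 := ne_of_gt hc
        have he : (1/c) • (l • y - p) = (l * a / c) • z - p := by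
          rw [hydef]
          match_scalars <;> field_simp <;> linarith
        have hmem : (l * a / c) • z - p ∈ closure T := by
          rw [← he]
          exact hclsmul _ (by positivity) _ hlT
        have : t₀ ≤ l * a / c := csInf_le hSbdd hmem
        rw [le_div_iff₀ hc] at this
        rw [div_le_iff₀ hd]
        nlinarith
    constructor
    · exact le_csInf ⟨_, hmem1⟩ hlow
    · exact csInf_le ⟨_, hlow⟩ hmem1
  -- tendsto of the lower bound
  have hlowt : Tendsto (fun a : ℝ => t₀ / (a + t₀ * (1 - a))) (𝓝[>] (0:ℝ)) (𝓝 1) := by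
    have hc : ContinuousAt (fun a : ℝ => t₀ / (a + t₀ * (1 - a))) 0 := by
      apply ContinuousAt.div continuousAt_const (by fun_prop)
      simp
      positivity
    have := hc.tendsto.mono_left (nhdsWithin_le_nhds (s := Ioi (0:ℝ)))
    simpa [div_self (ne_of_gt ht₀pos)] using this
  have hupt : Tendsto (fun a : ℝ => 1 / (1 - a)) (𝓝[>] (0:ℝ)) (𝓝 1) := by
    have hc : ContinuousAt (fun a : ℝ => 1 / (1 - a)) 0 := by
      apply ContinuousAt.div continuousAt_const (by fun_prop)
      norm_num
    have := hc.tendsto.mono_left (nhdsWithin_le_nhds (s := Ioi (0:ℝ)))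
    simpa using this
  have hIoo : Ioo (0:ℝ) 1 ∈ 𝓝[>] (0:ℝ) := Ioo_mem_nhdsGT_of_mem ⟨le_refl 0, one_pos⟩
  have hmain : Tendsto (fun l : ℝ => funkM T p ((1 - l) • p + l • z)) (𝓝[>] (0:ℝ)) (𝓝 1) := by
    apply tendsto_of_tendsto_of_tendsto_of_le_of_le' hlowt hupt
    · filter_upwards [hIoo] with a ha using (key a ha).1
    · filter_upwards [hIoo] with a ha using (key a ha).2
  refine ⟨hmain, ?_⟩
  have hlog : Tendsto Real.log (𝓝 (1:ℝ)) (𝓝 0) := by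
    have := (Real.continuousAt_log (by norm_num : (1:ℝ) ≠ 0)).tendsto
    simpa using this
  have := hlog.comp hmain
  exact this
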